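/- Under assumptions (H) on the perturbed dynamical system, fix a > 0, set ψ₁(x) = exp(a|x|), let R ≥ 1 and K := B(0,R) ∩ E (intersection of the ball of radius R with E). Then there exists a constant c > 0 such that for every measurable A ⊆ K, every x ∈ E and every y ∈ K: P_1(ψ₁ 1_A)(x)/ψ₁(x) ≤ c · P_1(ψ₁ 1_A)(y)/ψ₁(y). -/

import Mathlib

open MeasureTheory Set NNReal ENNReal

noncomputable section

variable {d : ℕ}

/-- The law of a (possibly non-centered) nondegenerate Gaussian random vector on `ℝ^d`:
it has a density with mean `m` and positive-definite covariance matrix `Cov` with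
respect to the Lebesgue measure. -/
def IsNondegGaussian (γ : Measure (EuclideanSpace ℝ (Fin d))) : Prop :=
  ∃ (m : EuclideanSpace ℝ (Fin d)) (Cov : Matrix (Fin d) (Fin d) ℝ), Cov.PosDef ∧
    γ = volume.withDensity (fun z => ENNReal.ofReal
      ((Real.sqrt ((2 * Real.pi) ^ d * Cov.det))⁻¹ *
        Real.exp (-(∑ i, ∑ j, (z i - m i) * Cov⁻¹ i j * (z j - m j)) / 2)))

/-- One step of the Feynman–Kac semigroup associated with the perturbed dynamical
system `X_{n+1} = F(X_n) + ξ_n` (noise law `γ`), penalization `G` and domain `Edom`: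
`P_1 f(x) = ∫ G(F(x)+z) 1_{Edom}(F(x)+z) f(F(x)+z) γ(dz)`. -/
def FKstep (Edom : Set (EuclideanSpace ℝ (Fin d)))
    (F : EuclideanSpace ℝ (Fin d) → EuclideanSpace ℝ (Fin d))
    (G : EuclideanSpace ℝ (Fin d) → ℝ) (γ : Measure (EuclideanSpace ℝ (Fin d)))
    (f : EuclideanSpace ℝ (Fin d) → ℝ) (x : EuclideanSpace ℝ (Fin d)) : ℝ :=
  ∫ z, Edom.indicator (fun y => G y * f y) (F x + z) ∂γ

/-- The Feynman–Kac semigroup: `P_0 = Id`, `P_n = (P_1)^n`. -/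
def FK (Edom : Set (EuclideanSpace ℝ (Fin d)))
    (F : EuclideanSpace ℝ (Fin d) → EuclideanSpace ℝ (Fin d))
    (G : EuclideanSpace ℝ (Fin d) → ℝ) (γ : Measure (EuclideanSpace ℝ (Fin d))) :
    ℕ → (EuclideanSpace ℝ (Fin d) → ℝ) → EuclideanSpace ℝ (Fin d) → ℝ :=
  fun n => (FKstep Edom F G γ)^[n]

set_option maxHeartbeats 2000000 in
/-- Uniform comparison of one-step masses (key step towards (G1) and (G3)): under
assumptions (H), with `ψ₁(x) = exp(a|x|)`, `R ≥ 1` and `K := B(0,R) ∩ E`, there is a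
constant `c > 0` such that for all measurable `A ⊆ K`, all `x ∈ E` and all `y ∈ K`,
`P_1(ψ₁ 1_A)(x)/ψ₁(x) ≤ c P_1(ψ₁ 1_A)(y)/ψ₁(y)`. -/
theorem FK_one_step_comparison
    (Edom : Set (EuclideanSpace ℝ (Fin d)))
    (hEm : MeasurableSet Edom) (hEpos : 0 < volume Edom)
    (F : EuclideanSpace ℝ (Fin d) → EuclideanSpace ℝ (Fin d))
    (hFm : Measurable F)
    (hFloc : ∀ R : ℝ, ∃ M : ℝ, ∀ x, ‖x‖ ≤ R → ‖F x‖ ≤ M)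
    (G : EuclideanSpace ℝ (Fin d) → ℝ)
    (hGm : Measurable G) (hGpos : ∀ x ∈ Edom, 0 < G x)
    (hGinvloc : ∀ R : ℝ, ∃ M : ℝ, ∀ x ∈ Edom, ‖x‖ ≤ R → 1 / G x ≤ M)
    (C : ℝ) (hC : 0 < C) (hGgrowth : ∀ x ∈ Edom, G x ≤ C * Real.exp ‖x‖)
    (p : ℝ) (hp : 1 < p)
    (hdrift : ∀ M : ℝ, ∃ R : ℝ, ∀ x, R ≤ ‖x‖ → M ≤ ‖x‖ - p * ‖F x‖)
    (γ : Measure (EuclideanSpace ℝ (Fin d))) (hγ : IsNondegGaussian γ)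
    (a : ℝ) (ha : 0 < a) (R : ℝ) (hR : 1 ≤ R) :
    ∃ c : ℝ, 0 < c ∧
      ∀ A ⊆ Metric.closedBall (0 : EuclideanSpace ℝ (Fin d)) R ∩ Edom,
        MeasurableSet A →
        ∀ x ∈ Edom, ∀ y ∈ Metric.closedBall (0 : EuclideanSpace ℝ (Fin d)) R ∩ Edom,
          FK Edom F G γ 1 (A.indicator fun w => Real.exp (a * ‖w‖)) x /
              Real.exp (a * ‖x‖) ≤
            c * (FK Edom F G γ 1 (A.indicator fun w => Real.exp (a * ‖w‖)) y /
              Real.exp (a * ‖y‖)) := by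
    classical
  obtain ⟨m, Cov, hCov, hγeq⟩ := hγ
  -- the Gaussian density
  set c₀ : ℝ := (Real.sqrt ((2 * Real.pi) ^ d * Cov.det))⁻¹ with hc₀def
  set Qf : EuclideanSpace ℝ (Fin d) → ℝ :=
    fun z => ∑ i, ∑ j, (z i - m i) * Cov⁻¹ i j * (z j - m j) with hQfdef
  set ρ : EuclideanSpace ℝ (Fin d) → ℝ :=
    fun z => c₀ * Real.exp (-(Qf z) / 2) with hρdef
  have hγeq' : γ = volume.withDensity (fun z => ENNReal.ofReal (ρ z)) := by
    rw [hρdef, hQfdef, hc₀def]; exact hγeq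
  have hc₀ : 0 < c₀ := by
    have h1 : (0:ℝ) < (2 * Real.pi) ^ d * Cov.det :=
      mul_pos (pow_pos (by positivity) d) hCov.det_pos
    rw [hc₀def]
    exact inv_pos.2 (Real.sqrt_pos.2 h1)
  have hQnn : ∀ z, 0 ≤ Qf z := by
    intro z
    have h := hCov.inv.posSemidef.dotProduct_mulVec_nonneg (fun i => z i - m i)
    rw [hQfdef]
    simpa [dotProduct, Matrix.mulVec, Finset.mul_sum, mul_assoc] using h
  have hρpos : ∀ u, 0 < ρ u := fun u => mul_pos hc₀ (Real.exp_pos _)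
  have hρle : ∀ u, ρ u ≤ c₀ := by
    intro u
    have h1 : Real.exp (-(Qf u) / 2) ≤ 1 := by
      rw [show (1:ℝ) = Real.exp 0 by simp]
      exact Real.exp_le_exp.2 (by nlinarith [hQnn u])
    calc ρ u = c₀ * Real.exp (-(Qf u) / 2) := rfl
      _ ≤ c₀ * 1 := by exact mul_le_mul_of_nonneg_left h1 hc₀.le
      _ = c₀ := mul_one _
  have hQC : Continuous Qf := by
    rw [hQfdef]
    refine continuous_finset_sum _ fun i _ => continuous_finset_sum _ fun j _ => ?_
    exact (((PiLp.continuous_apply (p := 2) (β := fun _ : Fin d => ℝ) i).sub continuous_const).mul continuous_const).mul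
      ((PiLp.continuous_apply (p := 2) (β := fun _ : Fin d => ℝ) j).sub continuous_const)
  have hρC : Continuous ρ := by
    rw [hρdef]
    exact continuous_const.mul (Real.continuous_exp.comp (hQC.neg.div_const 2))
  have hρmeas : Measurable ρ := hρC.measurable
  -- bound on F over the ball
  obtain ⟨M0, hM0⟩ := hFloc R
  set M : ℝ := max M0 0 with hMdef
  have hM0' : (0:ℝ) ≤ M := le_max_right _ _
  have hFbound : ∀ y : EuclideanSpace ℝ (Fin d), ‖y‖ ≤ R → ‖F y‖ ≤ M :=
    fun y hy => (hM0 y hy).trans (le_max_left _ _)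
  -- lower bound for the density on the ball of radius R + M
  have hr0 : (0:ℝ) ≤ R + M := by linarith
  obtain ⟨u₀, hu₀mem, hu₀'⟩ :=
    (isCompact_closedBall (0 : EuclideanSpace ℝ (Fin d)) (R + M)).exists_isMaxOn
      ⟨0, Metric.mem_closedBall_self hr0⟩ hQC.continuousOn
  have hu₀ : ∀ u ∈ Metric.closedBall (0 : EuclideanSpace ℝ (Fin d)) (R + M), Qf u ≤ Qf u₀ :=
    fun u hu => hu₀' hu
  set ε : ℝ := c₀ * Real.exp (-(Qf u₀) / 2) with hεdef
  have hεpos : 0 < ε := mul_pos hc₀ (Real.exp_pos _)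
  have hρlower : ∀ u : EuclideanSpace ℝ (Fin d), ‖u‖ ≤ R + M → ε ≤ ρ u := by
    intro u hu
    have humem : u ∈ Metric.closedBall (0 : EuclideanSpace ℝ (Fin d)) (R + M) := by
      simpa [Metric.mem_closedBall, dist_eq_norm] using hu
    have h1 : Qf u ≤ Qf u₀ := hu₀ u humem
    have h2 : Real.exp (-(Qf u₀) / 2) ≤ Real.exp (-(Qf u) / 2) :=
      Real.exp_le_exp.2 (by linarith)
    calc ε = c₀ * Real.exp (-(Qf u₀) / 2) := rfl
      _ ≤ c₀ * Real.exp (-(Qf u) / 2) := mul_le_mul_of_nonneg_left h2 hc₀.le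
      _ = ρ u := rfl
  -- bound on 1/G over the ball
  obtain ⟨MG0, hMG0⟩ := hGinvloc R
  set MG : ℝ := max MG0 1 with hMGdef
  have hMG1 : (1:ℝ) ≤ MG := le_max_right _ _
  have hMGpos : (0:ℝ) < MG := lt_of_lt_of_le one_pos hMG1
  have hGlower : ∀ w ∈ Edom, ‖w‖ ≤ R → 1 / MG ≤ G w := by
    intro w hw hwR
    have h1 : 1 / G w ≤ MG := (hMG0 w hw hwR).trans (le_max_left _ _)
    have hGw : 0 < G w := hGpos w hw
    rw [div_le_iff₀ hGw] at h1
    rw [div_le_iff₀ hMGpos]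
    linarith [h1]
  -- constants
  set U : ℝ := C * Real.exp R * Real.exp (a * R) * c₀ with hUdef
  have hU : 0 < U := by positivity
  set ℓ : ℝ := 1 / MG * ε with hℓdef
  have hℓ : 0 < ℓ := by positivity
  set c : ℝ := U * Real.exp (a * R) * MG / ε with hcdef
  have hcpos : 0 < c := by positivity
  refine ⟨c, hcpos, ?_⟩
  intro A hAsub hA x hx y hy
  have hAK : A ⊆ Metric.closedBall (0 : EuclideanSpace ℝ (Fin d)) R := fun w hw =>
    (hAsub hw).1
  have hAE : A ⊆ Edom := fun w hw => (hAsub hw).2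
  have hAnorm : ∀ w ∈ A, ‖w‖ ≤ R := by
    intro w hw
    have := hAK hw
    simpa [Metric.mem_closedBall, dist_eq_norm] using this
  have hAfin : volume A < ⊤ :=
    lt_of_le_of_lt (measure_mono hAK) measure_closedBall_lt_top
  -- representation of the one-step Feynman–Kac integral
  have hrepr : ∀ x' : EuclideanSpace ℝ (Fin d),
      FK Edom F G γ 1 (A.indicator fun w => Real.exp (a * ‖w‖)) x'
        = ∫ w in A, G w * Real.exp (a * ‖w‖) * ρ (w - F x') ∂volume := by
    intro x'
    have hFK1 : FK Edom F G γ 1 (A.indicator fun w => Real.exp (a * ‖w‖)) x'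
        = FKstep Edom F G γ (A.indicator fun w => Real.exp (a * ‖w‖)) x' := by
      simp [FK]
    rw [hFK1]
    unfold FKstep
    have hind : ∀ w : EuclideanSpace ℝ (Fin d),
        Edom.indicator (fun v => G v * (A.indicator fun u => Real.exp (a * ‖u‖)) v) w
          = A.indicator (fun v => G v * Real.exp (a * ‖v‖)) w := by
      intro w
      by_cases hw : w ∈ A
      · have hwE : w ∈ Edom := hAE hw
        simp [Set.indicator_apply, hw, hwE]
      · simp [Set.indicator_apply, hw]
    simp_rw [hind]
    rw [hγeq']
    have hmeasnn : Measurable fun z : EuclideanSpace ℝ (Fin d) => (ρ z).toNNReal :=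
      hρmeas.real_toNNReal
    have hwd : (volume.withDensity fun z : EuclideanSpace ℝ (Fin d) => ENNReal.ofReal (ρ z))
        = volume.withDensity fun z : EuclideanSpace ℝ (Fin d) =>
            (((ρ z).toNNReal : ℝ≥0) : ℝ≥0∞) := rfl
    rw [hwd, integral_withDensity_eq_integral_smul hmeasnn]
    have hsmul : ∀ z : EuclideanSpace ℝ (Fin d),
        (ρ z).toNNReal • (A.indicator (fun v => G v * Real.exp (a * ‖v‖)) (F x' + z))
          = ρ z * A.indicator (fun v => G v * Real.exp (a * ‖v‖)) (F x' + z) := by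
      intro z
      rw [NNReal.smul_def, Real.coe_toNNReal _ (hρpos z).le, smul_eq_mul]
    simp_rw [hsmul]
    have hcomp : (fun z : EuclideanSpace ℝ (Fin d) =>
        ρ z * A.indicator (fun v => G v * Real.exp (a * ‖v‖)) (F x' + z))
        = fun z => (fun w => ρ (w - F x') *
            A.indicator (fun v => G v * Real.exp (a * ‖v‖)) w) (F x' + z) := by
      funext z
      simp [add_sub_cancel_left]
    rw [hcomp, integral_add_left_eq_self
      (fun w => ρ (w - F x') * A.indicator (fun v => G v * Real.exp (a * ‖v‖)) w) (F x')]
    have hindic : (fun w : EuclideanSpace ℝ (Fin d) =>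
        ρ (w - F x') * A.indicator (fun v => G v * Real.exp (a * ‖v‖)) w)
        = A.indicator (fun w => G w * Real.exp (a * ‖w‖) * ρ (w - F x')) := by
      funext w
      by_cases hw : w ∈ A
      · simp only [Set.indicator_of_mem hw]
        ring
      · simp [Set.indicator_of_notMem hw]
    rw [hindic, integral_indicator hA]
  -- measurability of the integrand
  have hintmeas : ∀ x' : EuclideanSpace ℝ (Fin d),
      Measurable fun w : EuclideanSpace ℝ (Fin d) =>
        G w * Real.exp (a * ‖w‖) * ρ (w - F x') := by
    intro x'
    have h1 : Measurable fun w : EuclideanSpace ℝ (Fin d) => Real.exp (a * ‖w‖) :=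
      Real.measurable_exp.comp (measurable_norm.const_mul a)
    have h2 : Measurable fun w : EuclideanSpace ℝ (Fin d) => ρ (w - F x') :=
      hρmeas.comp (measurable_id.sub measurable_const)
    exact (hGm.mul h1).mul h2
  -- nonnegativity and upper bound at x
  have hFKnn : ∀ x' : EuclideanSpace ℝ (Fin d),
      0 ≤ FK Edom F G γ 1 (A.indicator fun w => Real.exp (a * ‖w‖)) x' := by
    intro x'
    rw [hrepr x']
    refine setIntegral_nonneg hA fun w hw => ?_
    have hGw : 0 < G w := hGpos w (hAE hw)
    positivity
  have hupper : ∀ x' : EuclideanSpace ℝ (Fin d),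
      FK Edom F G γ 1 (A.indicator fun w => Real.exp (a * ‖w‖)) x'
        ≤ U * (volume A).toReal := by
    intro x'
    rw [hrepr x']
    have hb : ∀ w ∈ A, ‖G w * Real.exp (a * ‖w‖) * ρ (w - F x')‖ ≤ U := by
      intro w hw
      have hwE : w ∈ Edom := hAE hw
      have hwR : ‖w‖ ≤ R := hAnorm w hw
      have hGw : 0 < G w := hGpos w hwE
      have h1 : G w ≤ C * Real.exp R :=
        (hGgrowth w hwE).trans (mul_le_mul_of_nonneg_left (Real.exp_le_exp.2 hwR) hC.le)
      have h2 : Real.exp (a * ‖w‖) ≤ Real.exp (a * R) :=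
        Real.exp_le_exp.2 (mul_le_mul_of_nonneg_left hwR ha.le)
      have h3 : ρ (w - F x') ≤ c₀ := hρle _
      have hnn : 0 ≤ G w * Real.exp (a * ‖w‖) * ρ (w - F x') := by positivity
      rw [Real.norm_eq_abs, abs_of_nonneg hnn, hUdef]
      have h12 : G w * Real.exp (a * ‖w‖) ≤ C * Real.exp R * Real.exp (a * R) :=
        mul_le_mul h1 h2 (Real.exp_pos _).le (by positivity)
      exact mul_le_mul h12 h3 (hρpos _).le (by positivity)
    have h := norm_setIntegral_le_of_norm_le_const (μ := volume) hAfin hb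
    rw [Real.norm_eq_abs] at h
    exact (le_abs_self _).trans h
  -- lower bound at y ∈ K
  have hyball : ‖y‖ ≤ R := by
    have := hy.1
    simpa [Metric.mem_closedBall, dist_eq_norm] using this
  have hlower : ℓ * (volume A).toReal
      ≤ FK Edom F G γ 1 (A.indicator fun w => Real.exp (a * ‖w‖)) y := by
    rw [hrepr y]
    rw [show ℓ * (volume A).toReal = volume.real A • ℓ by rw [smul_eq_mul, mul_comm, measureReal_def]]
    refine setIntegral_ge_of_const_le hA hAfin.ne ?_ ?_
    · intro w hw
      have hwE : w ∈ Edom := hAE hw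
      have hwR : ‖w‖ ≤ R := hAnorm w hw
      have hGw : 1 / MG ≤ G w := hGlower w hwE hwR
      have hexp1 : (1:ℝ) ≤ Real.exp (a * ‖w‖) :=
        Real.one_le_exp (by positivity)
      have hdist : ‖w - F y‖ ≤ R + M := by
        have hFy : ‖F y‖ ≤ M := hFbound y hyball
        calc ‖w - F y‖ ≤ ‖w‖ + ‖F y‖ := norm_sub_le _ _
          _ ≤ R + M := add_le_add hwR hFy
      have hρw : ε ≤ ρ (w - F y) := hρlower _ hdist
      have h12 : 1 / MG * 1 ≤ G w * Real.exp (a * ‖w‖) :=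
        mul_le_mul hGw hexp1 one_pos.le (lt_of_lt_of_le (by positivity) hGw).le
      calc ℓ = 1 / MG * 1 * ε := by rw [hℓdef]; ring
        _ ≤ G w * Real.exp (a * ‖w‖) * ρ (w - F y) :=
          mul_le_mul h12 hρw hεpos.le (le_trans (by positivity) h12)
    · refine Measure.integrableOn_of_bounded (M := U) hAfin.ne
        (hintmeas y).aestronglyMeasurable ?_
      filter_upwards [MeasureTheory.ae_restrict_mem hA] with w hw
      have hwE : w ∈ Edom := hAE hw
      have hwR : ‖w‖ ≤ R := hAnorm w hw
      have hGw : 0 < G w := hGpos w hwE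
      have h1 : G w ≤ C * Real.exp R :=
        (hGgrowth w hwE).trans (mul_le_mul_of_nonneg_left (Real.exp_le_exp.2 hwR) hC.le)
      have h2 : Real.exp (a * ‖w‖) ≤ Real.exp (a * R) :=
        Real.exp_le_exp.2 (mul_le_mul_of_nonneg_left hwR ha.le)
      have hnn : 0 ≤ G w * Real.exp (a * ‖w‖) * ρ (w - F y) := by positivity
      rw [Real.norm_eq_abs, abs_of_nonneg hnn, hUdef]
      have h12 : G w * Real.exp (a * ‖w‖) ≤ C * Real.exp R * Real.exp (a * R) :=
        mul_le_mul h1 h2 (Real.exp_pos _).le (by positivity)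
      exact mul_le_mul h12 (hρle _) (hρpos _).le (by positivity)
  -- put everything together
  have hexpx : (1:ℝ) ≤ Real.exp (a * ‖x‖) := Real.one_le_exp (by positivity)
  have hexpy : Real.exp (a * ‖y‖) ≤ Real.exp (a * R) :=
    Real.exp_le_exp.2 (mul_le_mul_of_nonneg_left hyball ha.le)
  have hstep1 : FK Edom F G γ 1 (A.indicator fun w => Real.exp (a * ‖w‖)) x /
      Real.exp (a * ‖x‖) ≤ U * (volume A).toReal :=
    le_trans (div_le_self (hFKnn x) hexpx) (hupper x)
  have hstep2 : ℓ * (volume A).toReal / Real.exp (a * R)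
      ≤ FK Edom F G γ 1 (A.indicator fun w => Real.exp (a * ‖w‖)) y /
        Real.exp (a * ‖y‖) :=
    div_le_div₀ (hFKnn y) (hlower) (Real.exp_pos _) hexpy
  have hkey : U * (volume A).toReal = c * (ℓ * (volume A).toReal / Real.exp (a * R)) := by
    rw [hcdef, hℓdef]
    field_simp
  calc FK Edom F G γ 1 (A.indicator fun w => Real.exp (a * ‖w‖)) x / Real.exp (a * ‖x‖)
      ≤ U * (volume A).toReal := hstep1
    _ = c * (ℓ * (volume A).toReal / Real.exp (a * R)) := hkey
    _ ≤ c * (FK Edom F G γ 1 (A.indicator fun w => Real.exp (a * ‖w‖)) y /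
        Real.exp (a * ‖y‖)) := mul_le_mul_of_nonneg_left hstep2 hcpos.le
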